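/- If f: {0,1}^n → {0,1} is non-constant, with f(z₁) = 1 and f(z₂) = 0, then letting X^{z₁⊕z₂} denote the tensor product of X gates on positions where z₁ and z₂ differ (and identity elsewhere, including on the last qubit), the operator C_f† X^{z₁⊕z₂} C_f is not an element of the (n+1)-qubit Pauli group; in particular, C_f is not a Clifford unitary. -/
import Mathlib


open Complex Matrix

noncomputable section

/-- The diagonal unitary `C_f` on `n+1` qubits. -/
def Cf (n : ℕ) (f : (Fin n → Bool) → Bool) :
    Matrix ((Fin n → Bool) × Bool) ((Fin n → Bool) × Bool) ℂ :=
  Matrix.diagonal fun p =>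
    Complex.exp (Complex.I * (Real.pi / 4) * (1 - 2 * (if p.2 then 1 else 0)) *
      (if f p.1 then 1 else 0))

/-- The Pauli operator `X^a Z^b` on `n+1` qubits, acting on basis states as
`|v⟩ ↦ (-1)^{b·v} |v ⊕ a⟩`. -/
def pauliXZ (n : ℕ) (a b : (Fin n → Bool) × Bool) :
    Matrix ((Fin n → Bool) × Bool) ((Fin n → Bool) × Bool) ℂ :=
  fun w v =>
    if w = ((fun i => xor (v.1 i) (a.1 i)), xor v.2 a.2) then
      (-1 : ℂ) ^ (((Finset.univ.filter fun i => b.1 i ∧ v.1 i).card) +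
        (if b.2 ∧ v.2 then 1 else 0))
    else 0

/-- The Pauli group on `n+1` qubits: phases `±1, ±i` times operators `X^a Z^b`. -/
def PauliGroup (n : ℕ) :
    Set (Matrix ((Fin n → Bool) × Bool) ((Fin n → Bool) × Bool) ℂ) :=
  {P | ∃ (c : ℂ) (a b : (Fin n → Bool) × Bool),
    c ∈ ({1, Complex.I, -1, -Complex.I} : Set ℂ) ∧ P = c • pauliXZ n a b}

/-- The Pauli operator `X^{z₁ ⊕ z₂}`: `X` on qubit `i` iff `z₁ i ≠ z₂ i`, identity on
the last qubit. -/
def Xdiff (n : ℕ) (z₁ z₂ : Fin n → Bool) :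
    Matrix ((Fin n → Bool) × Bool) ((Fin n → Bool) × Bool) ℂ :=
  pauliXZ n ((fun i => xor (z₁ i) (z₂ i)), false) ((fun _ => false), false)

/-- If `f` is non-constant, witnessed by `f z₁ = 1`, `f z₂ = 0`, then
`C_f† X^{z₁⊕z₂} C_f` is not a Pauli group element; in particular `C_f` is not Clifford. -/
lemma entry_eq (n : ℕ) (f : (Fin n → Bool) → Bool)
    (A : Matrix ((Fin n → Bool) × Bool) ((Fin n → Bool) × Bool) ℂ)
    (w v : (Fin n → Bool) × Bool) :
    ((Cf n f)ᴴ * A * Cf n f) w v =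
      star (Complex.exp (Complex.I * (Real.pi / 4) * (1 - 2 * (if w.2 then 1 else 0)) *
        (if f w.1 then 1 else 0))) * A w v *
      Complex.exp (Complex.I * (Real.pi / 4) * (1 - 2 * (if v.2 then 1 else 0)) *
        (if f v.1 then 1 else 0)) := by
  rw [Cf, Matrix.diagonal_conjTranspose, Matrix.mul_diagonal, Matrix.diagonal_mul]
  rfl

lemma Xdiff_apply (n : ℕ) (z₁ z₂ : Fin n → Bool) (y : Bool) :
    Xdiff n z₁ z₂ (z₁, y) (z₂, y) = 1 := by
  have hx : ((z₁, y) : (Fin n → Bool) × Bool) =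
      ((fun i => xor (z₂ i) (xor (z₁ i) (z₂ i))), xor y false) := by
    have key : ∀ p q : Bool, p = (q ^^ (p ^^ q)) := by decide
    refine Prod.ext ?_ ?_
    · funext i; exact key (z₁ i) (z₂ i)
    · cases y <;> rfl
  rw [Xdiff, pauliXZ, if_pos hx]
  simp

theorem Cf_not_clifford (n : ℕ) (f : (Fin n → Bool) → Bool) (z₁ z₂ : Fin n → Bool)
    (h₁ : f z₁ = true) (h₂ : f z₂ = false) :
    (Cf n f)ᴴ * Xdiff n z₁ z₂ * Cf n f ∉ PauliGroup n ∧
    ¬ (∀ P ∈ PauliGroup n, (Cf n f)ᴴ * P * Cf n f ∈ PauliGroup n) := by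
  have key : (Cf n f)ᴴ * Xdiff n z₁ z₂ * Cf n f ∉ PauliGroup n := by
    rintro ⟨c, a, b, hc, heq⟩
    have he₁ : ((Cf n f)ᴴ * Xdiff n z₁ z₂ * Cf n f) (z₁, false) (z₂, false) =
        Complex.exp (-(Complex.I * (Real.pi / 4))) := by
      rw [entry_eq, Xdiff_apply]
      simp [h₁, h₂, Complex.star_def, ← Complex.exp_conj, _root_.map_mul, map_sub,
        _root_.map_one, map_ofNat, map_div₀, Complex.conj_I, Complex.conj_ofReal]
    have he₂ : ((Cf n f)ᴴ * Xdiff n z₁ z₂ * Cf n f) (z₁, true) (z₂, true) =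
        Complex.exp (Complex.I * (Real.pi / 4)) := by
      rw [entry_eq, Xdiff_apply]
      simp [h₁, h₂, Complex.star_def, ← Complex.exp_conj, _root_.map_mul, map_sub,
        _root_.map_one, map_ofNat, map_div₀, Complex.conj_I, Complex.conj_ofReal]
      ring_nf
    have E₁ : c * pauliXZ n a b (z₁, false) (z₂, false) =
        Complex.exp (-(Complex.I * (Real.pi / 4))) := by
      rw [← he₁, heq]; simp [Matrix.smul_apply]
    have E₂ : c * pauliXZ n a b (z₁, true) (z₂, true) =
        Complex.exp (Complex.I * (Real.pi / 4)) := by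
      rw [← he₂, heq]; simp [Matrix.smul_apply]
    have hsq : ∀ w v : (Fin n → Bool) × Bool,
        pauliXZ n a b w v = 0 ∨ (pauliXZ n a b w v) ^ 2 = 1 := by
      intro w v
      rw [pauliXZ]
      split
      · right
        rw [← pow_mul, mul_comm, pow_mul, neg_one_sq, one_pow]
      · left; rfl
    have hp₁ : pauliXZ n a b (z₁, false) (z₂, false) ^ 2 = 1 := by
      rcases hsq (z₁, false) (z₂, false) with h | h
      · rw [h, mul_zero] at E₁
        exact absurd E₁.symm (Complex.exp_ne_zero _)
      · exact h
    have hp₂ : pauliXZ n a b (z₁, true) (z₂, true) ^ 2 = 1 := by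
      rcases hsq (z₁, true) (z₂, true) with h | h
      · rw [h, mul_zero] at E₂
        exact absurd E₂.symm (Complex.exp_ne_zero _)
      · exact h
    have h12 : Complex.exp (-(Complex.I * (Real.pi / 4))) ^ 2 =
        Complex.exp (Complex.I * (Real.pi / 4)) ^ 2 := by
      rw [← E₁, ← E₂, mul_pow, mul_pow, hp₁, hp₂]
    have habs : (1 : ℂ) = -1 := by
      have k1 : Complex.exp (-(Complex.I * (Real.pi / 4))) ^ 2 *
          Complex.exp (Complex.I * (Real.pi / 4)) ^ 2 = 1 := by
        rw [sq, sq, ← Complex.exp_add, ← Complex.exp_add, ← Complex.exp_add]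
        rw [show -(Complex.I * (Real.pi / 4)) + -(Complex.I * (Real.pi / 4)) +
          (Complex.I * (Real.pi / 4) + Complex.I * (Real.pi / 4)) = 0 by ring]
        exact Complex.exp_zero
      have k2 : Complex.exp (Complex.I * (Real.pi / 4)) ^ 2 *
          Complex.exp (Complex.I * (Real.pi / 4)) ^ 2 = -1 := by
        rw [sq, ← Complex.exp_add, ← Complex.exp_add]
        rw [show Complex.I * (Real.pi / 4) + Complex.I * (Real.pi / 4) +
          (Complex.I * (Real.pi / 4) + Complex.I * (Real.pi / 4)) =
          (Real.pi : ℂ) * Complex.I by ring]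
        exact Complex.exp_pi_mul_I
      have t := k1
      rw [h12, k2] at t
      exact t.symm
    norm_num at habs
  refine ⟨key, fun hall => key (hall _ ?_)⟩
  exact ⟨1, _, _, Or.inl rfl, by rw [Xdiff, one_smul]⟩

end
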